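/- Let f : {−1,1}ⁿ → [−1,1] with E_x[|f(x)|] = α. Then for every ℓ ∈ ℕ, Σ_{|S|=ℓ} f̂(S)² ≤ 4α² · (2e · ln(e/α^{1/ℓ}))^ℓ, where f̂(S) = E_x[f(x)·χ_S(x)] and χ_S(x) = Π_{i∈S} x_i. -/

import Mathlib

open Finset

namespace LevelIneq

noncomputable def sg (b : Bool) : ℝ := if b then -1 else 1

noncomputable def bch (s b : Bool) : ℝ := if s then sg b else 1

noncomputable def chi {n : ℕ} (s x : Fin n → Bool) : ℝ := ∏ i, bch (s i) (x i)

def wt {n : ℕ} (s : Fin n → Bool) : ℕ := ∑ i, if s i then 1 else 0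

lemma bch_orth (s t : Bool) : ∑ b, bch s b * bch t b = if s = t then 2 else 0 := by
  cases s <;> cases t <;> simp [bch, sg] <;> norm_num

lemma chi_orth {n : ℕ} (s t : Fin n → Bool) :
    ∑ x, chi s x * chi t x = if s = t then (2:ℝ)^n else 0 := by
  have h1 : ∀ x : Fin n → Bool, chi s x * chi t x = ∏ i, (bch (s i) (x i) * bch (t i) (x i)) := by
    intro x; rw [chi, chi, ← Finset.prod_mul_distrib]
  simp_rw [h1]
  rw [← Fintype.prod_sum (fun i b => bch (s i) b * bch (t i) b)]
  simp_rw [bch_orth]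
  by_cases h : s = t
  · subst h; simp
  · rw [if_neg h]
    obtain ⟨i, hi⟩ := Function.ne_iff.mp h
    exact Finset.prod_eq_zero (Finset.mem_univ i) (by rw [if_neg hi])


lemma sum_mul_expand {n : ℕ} (c d : (Fin n → Bool) → ℝ) :
    ∑ x, (∑ s, c s * chi s x) * (∑ t, d t * chi t x) = (2:ℝ)^n * ∑ s, c s * d s := by
  have h : ∀ x : Fin n → Bool, (∑ s, c s * chi s x) * (∑ t, d t * chi t x)
      = ∑ s, ∑ t, c s * d t * (chi s x * chi t x) := by
    intro x
    rw [Finset.sum_mul_sum]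
    exact Finset.sum_congr rfl fun s _ => Finset.sum_congr rfl fun t _ => by ring
  simp_rw [h]
  rw [Finset.sum_comm]
  have h2 : ∀ s : Fin n → Bool, ∑ x, ∑ t, c s * d t * (chi s x * chi t x)
      = (2:ℝ)^n * (c s * d s) := by
    intro s
    rw [Finset.sum_comm]
    have : ∀ t : Fin n → Bool, ∑ x, c s * d t * (chi s x * chi t x)
        = c s * d t * (if s = t then (2:ℝ)^n else 0) := by
      intro t; rw [← Finset.mul_sum, chi_orth]
    simp_rw [this]
    simp only [mul_ite, mul_zero]
    rw [Finset.sum_ite_eq (Finset.univ) s (fun t => c s * d t * (2:ℝ)^n)]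
    simp [mul_comm]
  simp_rw [h2]
  rw [← Finset.mul_sum]

-- inner product with arbitrary f
lemma sum_f_mul_expand {n : ℕ} (f : (Fin n → Bool) → ℝ) (d : (Fin n → Bool) → ℝ) :
    ∑ x, f x * (∑ s, d s * chi s x) = ∑ s, d s * ∑ x, f x * chi s x := by
  simp_rw [Finset.mul_sum]
  rw [Finset.sum_comm]
  exact Finset.sum_congr rfl fun s _ => Finset.sum_congr rfl fun x _ => by ring


lemma sum_cons {n : ℕ} (g : (Fin (n+1) → Bool) → ℝ) :
    ∑ x, g x = ∑ b, ∑ y : Fin n → Bool, g (Fin.cons b y) := by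
  rw [← (Fin.consEquiv fun _ => Bool).sum_comp g, Fintype.sum_prod_type]
  rfl

lemma chi_cons {n : ℕ} (s0 b : Bool) (s y : Fin n → Bool) :
    chi (Fin.cons s0 s) (Fin.cons b y) = bch s0 b * chi s y := by
  rw [chi, Fin.prod_univ_succ]
  simp [chi]

lemma wt_cons {n : ℕ} (s0 : Bool) (s : Fin n → Bool) :
    wt (Fin.cons s0 s) = (if s0 then 1 else 0) + wt s := by
  rw [wt, Fin.sum_univ_succ]
  simp [wt]


def dfac (m : ℕ) : ℕ := ∏ i ∈ Finset.range m, (2*i+1)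

lemma dfac_succ (m : ℕ) : dfac (m+1) = dfac m * (2*m+1) := Finset.prod_range_succ _ _

lemma dfac_pos (m : ℕ) : 0 < dfac m := Finset.prod_pos fun i _ => by omega

lemma choose_dfac (k : ℕ) : ∀ j, j ≤ k →
    (2*k).choose (2*j) * (dfac j * dfac (k-j)) = k.choose j * dfac k := by
  intro j
  induction j with
  | zero => intro _; simp [dfac]
  | succ j ih =>
    intro hj
    have hj' : j ≤ k := by omega
    obtain ⟨a, rfl⟩ : ∃ a, k = (j+1) + a := ⟨k - (j+1), by omega⟩
    have ihh := ih hj'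
    rw [show (j+1+a) - j = a + 1 by omega, dfac_succ a] at ihh
    rw [show (j+1+a) - (j+1) = a by omega]
    have r1 := Nat.choose_succ_right_eq (2*(j+1+a)) (2*j)
    rw [show 2*(j+1+a) - 2*j = 2*a+2 by omega] at r1
    have r2 := Nat.choose_succ_right_eq (2*(j+1+a)) (2*j+1)
    rw [show 2*(j+1+a) - (2*j+1) = 2*a+1 by omega] at r2
    have r3 := Nat.choose_succ_right_eq (j+1+a) j
    rw [show (j+1+a) - j = a+1 by omega] at r3
    rw [dfac_succ j]
    rw [show 2*(j+1) = (2*j+1)+1 by omega]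
    apply Nat.eq_of_mul_eq_mul_right
      (show 0 < (2*j+1)*((2*j+2)*(j+1)) by positivity)
    have cast_goal : (((2*(j+1+a)).choose (2*j+1+1) * (dfac j * (2*j+1) * dfac a) : ℕ) : ℝ) * ((2*j+1)*((2*j+2)*(j+1)))
        = (((j+1+a).choose (j+1) * dfac (j+1+a) : ℕ) : ℝ) * ((2*j+1)*((2*j+2)*(j+1))) := by
      have r1' : ((2*(j+1+a)).choose (2*j+1) : ℝ) * (2*j+1) = ((2*(j+1+a)).choose (2*j) : ℝ) * (2*a+2) := by exact_mod_cast r1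
      have r2' : ((2*(j+1+a)).choose (2*j+1+1) : ℝ) * (2*j+1+1) = ((2*(j+1+a)).choose (2*j+1) : ℝ) * (2*a+1) := by exact_mod_cast r2
      have r3' : ((j+1+a).choose (j+1) : ℝ) * (j+1) = ((j+1+a).choose j : ℝ) * (a+1) := by exact_mod_cast r3
      have ihh' : ((2*(j+1+a)).choose (2*j) : ℝ) * ((dfac j : ℝ) * ((dfac a : ℝ) * (2*a+1))) = ((j+1+a).choose j : ℝ) * ((dfac (j+1+a) : ℝ)) := by exact_mod_cast ihh
      push_cast
      linear_combination
        ((dfac j : ℝ)*(2*(j:ℝ)+1)^2*(dfac a)*((j:ℝ)+1)) * r2'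
        + ((2*(a:ℝ)+1)*(dfac j)*(2*(j:ℝ)+1)*(dfac a)*((j:ℝ)+1)) * r1'
        + ((2*(a:ℝ)+2)*(2*(j:ℝ)+1)*((j:ℝ)+1)) * ihh'
        - ((dfac (j+1+a) : ℝ)*(2*(j:ℝ)+1)*(2*(j:ℝ)+2)) * r3'
    exact_mod_cast cast_goal

lemma choose_le (k j : ℕ) (h : j ≤ k) :
    (2*k).choose (2*j) ≤ k.choose j * (2*k-1)^j := by
  have key := choose_dfac k j h
  obtain ⟨m, rfl⟩ : ∃ m, k = m + j := ⟨k - j, by omega⟩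
  rw [show m + j - j = m by omega] at key
  have hd : dfac (m+j) ≤ (2*(m+j)-1)^j * (dfac j * dfac m) := by
    have hsplit : dfac (m+j) = dfac m * ∏ i ∈ Finset.range j, (2*(m+i)+1) := by
      rw [dfac, dfac, Finset.prod_range_add]
    have hb : ∏ i ∈ Finset.range j, (2*(m+i)+1) ≤ (2*(m+j)-1)^j := by
      calc ∏ i ∈ Finset.range j, (2*(m+i)+1)
          ≤ ∏ _i ∈ Finset.range j, (2*(m+j)-1) := by
            apply Finset.prod_le_prod'
            intro i hi
            have : i < j := Finset.mem_range.mp hi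
            omega
        _ = (2*(m+j)-1)^j := by rw [Finset.prod_const, Finset.card_range]
    calc dfac (m+j) = dfac m * ∏ i ∈ Finset.range j, (2*(m+i)+1) := hsplit
      _ ≤ dfac m * (2*(m+j)-1)^j := Nat.mul_le_mul_left _ hb
      _ ≤ (2*(m+j)-1)^j * (dfac j * dfac m) := by
          have h1 : 1 ≤ dfac j := dfac_pos j
          calc dfac m * (2*(m+j)-1)^j = (2*(m+j)-1)^j * (1 * dfac m) := by ring
            _ ≤ (2*(m+j)-1)^j * (dfac j * dfac m) :=
              Nat.mul_le_mul_left _ (Nat.mul_le_mul_right _ h1)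
  have hfin : (2*(m+j)).choose (2*j) * (dfac j * dfac m)
      ≤ ((m+j).choose j * (2*(m+j)-1)^j) * (dfac j * dfac m) := by
    rw [key]
    calc (m+j).choose j * dfac (m+j)
        ≤ (m+j).choose j * ((2*(m+j)-1)^j * (dfac j * dfac m)) := Nat.mul_le_mul_left _ hd
      _ = ((m+j).choose j * (2*(m+j)-1)^j) * (dfac j * dfac m) := by ring
  exact Nat.le_of_mul_le_mul_right hfin (by have := dfac_pos j; have := dfac_pos m; positivity)


lemma even_expand (k : ℕ) (a c : ℝ) :
    (a + c)^(2*k) + (a - c)^(2*k)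
      = ∑ i ∈ Finset.range (k+1), a^(2*i) * c^(2*(k-i)) * ((2*k).choose (2*i)) * 2 := by
  have h1 := add_pow a c (2*k)
  have h2 := add_pow a (-c) (2*k)
  rw [← sub_eq_add_neg] at h2
  set h : ℕ → ℝ := fun m => a^m * c^(2*k-m) * ((2*k).choose m) * (1 + (-1:ℝ)^(2*k-m)) with hh
  have key : (a + c)^(2*k) + (a - c)^(2*k) = ∑ m ∈ Finset.range (2*k+1), h m := by
    rw [h1, h2, ← Finset.sum_add_distrib]
    apply Finset.sum_congr rfl
    intro m _
    simp only [hh]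
    rw [neg_pow]
    ring
  rw [key]
  have himg : (Finset.range (k+1)).image (fun i => 2*i) ⊆ Finset.range (2*k+1) := by
    intro m hm
    obtain ⟨i, hi, rfl⟩ := Finset.mem_image.mp hm
    have := Finset.mem_range.mp hi
    exact Finset.mem_range.mpr (by omega)
  rw [← Finset.sum_subset himg ?van]
  · rw [Finset.sum_image (fun i _ j _ hij => by omega)]
    apply Finset.sum_congr rfl
    intro i hi
    have hik : i ≤ k := by have := Finset.mem_range.mp hi; omega
    simp only [hh]
    rw [show 2*k - 2*i = 2*(k-i) by omega]
    rw [pow_mul (-1:ℝ) 2 (k-i), neg_one_sq, one_pow]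
    ring
  case van =>
    intro m hm hnot
    have hmr := Finset.mem_range.mp hm
    have hodd : ¬ Even m := by
      intro ⟨i, hi⟩
      exact hnot (Finset.mem_image.mpr ⟨i, Finset.mem_range.mpr (by omega), by omega⟩)
    have : Odd (2*k - m) := by
      rcases Nat.even_or_odd m with he | ho
      · exact absurd he hodd
      · obtain ⟨i, hi⟩ := ho
        exact ⟨k - i - 1, by omega⟩
    simp only [hh]
    rw [Odd.neg_one_pow this]
    ring

lemma twopoint (k : ℕ) (hk : 1 ≤ k) (ρ : ℝ) (hρ2 : 0 ≤ ρ^2 * (2*(k:ℝ)-1))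
    (hρ : ρ^2 * (2*(k:ℝ)-1) ≤ 1) (a b : ℝ) :
    (a + ρ*b)^(2*k) + (a - ρ*b)^(2*k)
      ≤ ∑ i ∈ Finset.range (k+1), 2 * (k.choose i : ℝ) * a^(2*i) * b^(2*(k-i)) := by
  rw [even_expand]
  apply Finset.sum_le_sum
  intro i hi
  have hik : i ≤ k := by have := Finset.mem_range.mp hi; omega
  have hcast : (((2*k-1 : ℕ)) : ℝ) = 2*(k:ℝ) - 1 := by
    have : (1:ℕ) ≤ 2*k := by omega
    push_cast [this]
    ring
  have h1 : ((2*k).choose (2*i) : ℝ) ≤ (k.choose i : ℝ) * (2*(k:ℝ)-1)^(k-i) := by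
    have h0 := choose_le k (k-i) (by omega)
    rw [show 2*(k-i) = 2*k - 2*i by omega, Nat.choose_symm (by omega : 2*i ≤ 2*k),
      Nat.choose_symm hik] at h0
    calc ((2*k).choose (2*i) : ℝ) ≤ ((k.choose i * (2*k-1)^(k-i) : ℕ) : ℝ) := by exact_mod_cast h0
      _ = (k.choose i : ℝ) * (2*(k:ℝ)-1)^(k-i) := by rw [Nat.cast_mul, Nat.cast_pow, hcast]
  have hρsq : 0 ≤ (2*(k:ℝ)-1) := by
    have : (1:ℝ) ≤ (k:ℝ) := by exact_mod_cast hk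
    linarith
  have hc : ((2*k).choose (2*i) : ℝ) * (ρ^2)^(k-i) ≤ (k.choose i : ℝ) := by
    calc ((2*k).choose (2*i) : ℝ) * (ρ^2)^(k-i)
        ≤ ((k.choose i : ℝ) * (2*(k:ℝ)-1)^(k-i)) * (ρ^2)^(k-i) := by
          apply mul_le_mul_of_nonneg_right h1 (by positivity)
      _ = (k.choose i : ℝ) * (ρ^2 * (2*(k:ℝ)-1))^(k-i) := by
          rw [mul_pow]; ring
      _ ≤ (k.choose i : ℝ) * 1 := by
          apply mul_le_mul_of_nonneg_left _ (Nat.cast_nonneg _)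
          exact pow_le_one₀ hρ2 hρ
      _ = (k.choose i : ℝ) := mul_one _
  calc a^(2*i) * (ρ*b)^(2*(k-i)) * ((2*k).choose (2*i) : ℝ) * 2
      = (2*(a^2)^i*(b^2)^(k-i)) * (((2*k).choose (2*i) : ℝ) * (ρ^2)^(k-i)) := by
        rw [pow_mul a, mul_pow ρ b, pow_mul ρ, pow_mul b]; ring
    _ ≤ (2*(a^2)^i*(b^2)^(k-i)) * (k.choose i : ℝ) := by
        apply mul_le_mul_of_nonneg_left hc (by positivity)
    _ = 2 * (k.choose i : ℝ) * a^(2*i) * b^(2*(k-i)) := by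
        rw [pow_mul a, pow_mul b]; ring


lemma holder_sum {ι : Type*} [Fintype ι] (u v : ι → ℝ) (hu : ∀ y, 0 ≤ u y)
    (hv : ∀ y, 0 ≤ v y) (θ : ℝ) (h0 : 0 < θ) (h1 : θ < 1) :
    ∑ y, (u y) ^ θ * (v y) ^ (1 - θ) ≤ (∑ y, u y) ^ θ * (∑ y, v y) ^ (1 - θ) := by
  set U := ∑ y, u y with hU
  set V := ∑ y, v y with hV
  have hU0 : 0 ≤ U := Finset.sum_nonneg fun y _ => hu y
  have hV0 : 0 ≤ V := Finset.sum_nonneg fun y _ => hv y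
  rcases eq_or_lt_of_le hU0 with hU0' | hUpos
  · -- U = 0 : all u y = 0
    have hz : ∀ y ∈ Finset.univ, u y = 0 :=
      (Finset.sum_eq_zero_iff_of_nonneg fun y _ => hu y).mp hU0'.symm
    have : ∑ y, (u y) ^ θ * (v y) ^ (1-θ) = 0 := by
      apply Finset.sum_eq_zero
      intro y hy
      rw [hz y hy, Real.zero_rpow (ne_of_gt h0), zero_mul]
    rw [this, ← hU0', Real.zero_rpow (ne_of_gt h0), zero_mul]
  rcases eq_or_lt_of_le hV0 with hV0' | hVpos
  · have hz : ∀ y ∈ Finset.univ, v y = 0 :=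
      (Finset.sum_eq_zero_iff_of_nonneg fun y _ => hv y).mp hV0'.symm
    have : ∑ y, (u y) ^ θ * (v y) ^ (1-θ) = 0 := by
      apply Finset.sum_eq_zero
      intro y hy
      rw [hz y hy, Real.zero_rpow (by linarith), mul_zero]
    rw [this, ← hV0', Real.zero_rpow (by linarith), mul_zero]
  -- positive case
  have key : ∀ y, (u y) ^ θ * (v y) ^ (1-θ)
      ≤ U ^ θ * V ^ (1-θ) * (θ * (u y / U) + (1-θ) * (v y / V)) := by
    intro y
    have hgm := Real.geom_mean_le_arith_mean2_weighted (w₁ := θ) (w₂ := 1-θ)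
      (p₁ := u y / U) (p₂ := v y / V) (le_of_lt h0) (by linarith)
      (div_nonneg (hu y) hU0) (div_nonneg (hv y) hV0) (by ring)
    have heq : (u y) ^ θ * (v y) ^ (1-θ)
        = U ^ θ * V ^ (1-θ) * ((u y / U) ^ θ * (v y / V) ^ (1-θ)) := by
      rw [Real.div_rpow (hu y) hU0, Real.div_rpow (hv y) hV0]
      field_simp
    rw [heq]
    apply mul_le_mul_of_nonneg_left hgm
    positivity
  calc ∑ y, (u y) ^ θ * (v y) ^ (1-θ)
      ≤ ∑ y, U ^ θ * V ^ (1-θ) * (θ * (u y / U) + (1-θ) * (v y / V)) :=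
        Finset.sum_le_sum fun y _ => key y
    _ = U ^ θ * V ^ (1-θ) * (θ * (U / U) + (1-θ) * (V / V)) := by
        rw [← Finset.mul_sum]
        congr 1
        rw [Finset.sum_add_distrib, ← Finset.mul_sum, ← Finset.mul_sum,
          ← Finset.sum_div, ← Finset.sum_div]
    _ = U ^ θ * V ^ (1-θ) := by
        rw [div_self (ne_of_gt hUpos), div_self (ne_of_gt hVpos)]
        ring


lemma rpow_pow_div {z : ℝ} (hz : 0 ≤ z) (k i : ℕ) (hk : 1 ≤ k) :
    (z^k) ^ ((i:ℝ)/(k:ℝ)) = z^i := by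
  have hkne : (k:ℝ) ≠ 0 := by positivity
  rw [← Real.rpow_natCast z k, ← Real.rpow_natCast z i, ← Real.rpow_mul hz]
  congr 1
  field_simp

lemma hyper (k : ℕ) (hk : 1 ≤ k) (ρ : ℝ)
    (hρ : ρ^2 * (2*(k:ℝ)-1) ≤ 1) :
    ∀ n (c : (Fin n → Bool) → ℝ),
      ∑ x, (∑ s, ρ^(wt s) * c s * chi s x)^(2*k) ≤ 2^n * (∑ s, (c s)^2)^k := by
  have hρ2 : 0 ≤ ρ^2 * (2*(k:ℝ)-1) := by
    have : (1:ℝ) ≤ (k:ℝ) := by exact_mod_cast hk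
    have h2 : (0:ℝ) ≤ 2*(k:ℝ)-1 := by linarith
    positivity
  intro n
  induction n with
  | zero =>
    intro c
    rw [Fintype.sum_unique (fun x => (∑ s, ρ^(wt s) * c s * chi s x)^(2*k)),
      Fintype.sum_unique, Fintype.sum_unique (fun s => (c s)^2)]
    simp [wt, chi, pow_mul]
  | succ n ih =>
    intro c
    set a : (Fin n → Bool) → ℝ := fun t => c (Fin.cons false t) with ha
    set bb : (Fin n → Bool) → ℝ := fun t => c (Fin.cons true t) with hbb
    set A : (Fin n → Bool) → ℝ := fun y => ∑ t, ρ^(wt t) * a t * chi t y with hA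
    set B : (Fin n → Bool) → ℝ := fun y => ∑ t, ρ^(wt t) * bb t * chi t y with hB
    have hinner : ∀ (b0 : Bool) (y : Fin n → Bool),
        (∑ s : Fin (n+1) → Bool, ρ^(wt s) * c s * chi s (Fin.cons b0 y))
          = A y + sg b0 * (ρ * B y) := by
      intro b0 y
      rw [sum_cons (fun s => ρ^(wt s) * c s * chi s (Fin.cons b0 y)), Fintype.sum_bool]
      have htrue : ∀ t : Fin n → Bool,
          ρ^(wt (Fin.cons true t)) * c (Fin.cons true t) * chi (Fin.cons true t) (Fin.cons b0 y)
            = (sg b0 * ρ) * (ρ^(wt t) * bb t * chi t y) := by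
        intro t
        rw [wt_cons, chi_cons]
        simp only [if_pos trivial, bch, hbb]
        rw [pow_add, pow_one]
        ring
      have hfalse : ∀ t : Fin n → Bool,
          ρ^(wt (Fin.cons false t)) * c (Fin.cons false t) * chi (Fin.cons false t) (Fin.cons b0 y)
            = ρ^(wt t) * a t * chi t y := by
        intro t
        rw [wt_cons, chi_cons]
        simp only [bch, if_neg (Bool.false_ne_true), ha]
        ring
      rw [Finset.sum_congr rfl (fun t _ => htrue t),
        Finset.sum_congr rfl (fun t _ => hfalse t), ← Finset.mul_sum]
      rw [hA, hB]
      ring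
    -- outer sum splitting
    rw [sum_cons (fun x => (∑ s, ρ^(wt s) * c s * chi s x)^(2*k)), Fintype.sum_bool]
    simp only [hinner]
    have hsgt : sg true = -1 := rfl
    have hsgf : sg false = 1 := rfl
    rw [hsgt, hsgf]
    -- now: ∑ y, (A y + -1*(ρ*B y))^(2k) + ∑ y, (A y + 1*(ρ*B y))^(2k)
    have step2 : ∑ y, (A y + -1*(ρ*B y))^(2*k) + ∑ y, (A y + 1*(ρ*B y))^(2*k)
        ≤ ∑ i ∈ Finset.range (k+1), 2 * (k.choose i : ℝ)
            * ∑ y, (A y)^(2*i) * (B y)^(2*(k-i)) := by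
      rw [← Finset.sum_add_distrib]
      calc ∑ y, ((A y + -1*(ρ*B y))^(2*k) + (A y + 1*(ρ*B y))^(2*k))
          ≤ ∑ y, ∑ i ∈ Finset.range (k+1),
              2 * (k.choose i : ℝ) * (A y)^(2*i) * (B y)^(2*(k-i)) := by
            apply Finset.sum_le_sum
            intro y _
            have := twopoint k hk ρ hρ2 hρ (A y) (B y)
            calc (A y + -1*(ρ*B y))^(2*k) + (A y + 1*(ρ*B y))^(2*k)
                = (A y + ρ*(B y))^(2*k) + (A y - ρ*(B y))^(2*k) := by ring_nf
              _ ≤ _ := this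
        _ = ∑ i ∈ Finset.range (k+1), 2 * (k.choose i : ℝ)
              * ∑ y, (A y)^(2*i) * (B y)^(2*(k-i)) := by
            rw [Finset.sum_comm]
            exact Finset.sum_congr rfl fun i _ => by
              rw [Finset.mul_sum]
              exact Finset.sum_congr rfl fun y _ => by ring
    refine le_trans step2 ?_
    -- Hölder + IH per i
    set p := ∑ t, (a t)^2 with hp
    set q := ∑ t, (bb t)^2 with hq
    have hp0 : 0 ≤ p := Finset.sum_nonneg fun t _ => sq_nonneg _
    have hq0 : 0 ≤ q := Finset.sum_nonneg fun t _ => sq_nonneg _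
    have hP := ih a
    have hQ := ih bb
    -- hP : ∑ y, (A y)^(2*k) ≤ 2^n * p^k   (note A matches)
    have hSi : ∀ i ∈ Finset.range (k+1),
        ∑ y, (A y)^(2*i) * (B y)^(2*(k-i)) ≤ 2^n * (p^i * q^(k-i)) := by
      intro i hi
      have hik : i ≤ k := by have := Finset.mem_range.mp hi; omega
      rcases Nat.eq_zero_or_pos i with h0 | hipos
      · subst h0
        simp only [Nat.mul_zero, pow_zero, one_mul, Nat.sub_zero]
        calc ∑ y, (B y)^(2*k) ≤ 2^n * q^k := hQ
          _ = 2^n * (1 * q^k) := by ring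
          _ = _ := by norm_num
      rcases eq_or_lt_of_le hik with hik' | hilt
      · subst hik'
        simp only [Nat.sub_self, Nat.mul_zero, pow_zero, mul_one]
        calc ∑ y, (A y)^(2*i) ≤ 2^n * p^i := hP
          _ = 2^n * (p^i * 1) := by ring
          _ = _ := by norm_num
      -- 0 < i < k
      have hkpos : (0:ℝ) < (k:ℝ) := by exact_mod_cast hk
      set θ : ℝ := (i:ℝ)/(k:ℝ) with hθ
      have hθ0 : 0 < θ := by positivity
      have hθ1 : θ < 1 := by
        rw [hθ, div_lt_one hkpos]
        exact_mod_cast hilt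
      have hmθ : 1 - θ = ((k-i : ℕ):ℝ)/(k:ℝ) := by
        rw [hθ]
        have : ((k-i:ℕ):ℝ) = (k:ℝ) - (i:ℝ) := by
          have := Nat.cast_sub (le_of_lt hilt) (R := ℝ)
          exact this
        rw [this]
        field_simp
      have hrw : ∀ y, (A y)^(2*i) * (B y)^(2*(k-i))
          = ((A y)^(2*k))^θ * ((B y)^(2*k))^(1-θ) := by
        intro y
        rw [hmθ, hθ]
        rw [pow_mul (A y) 2 k, pow_mul (B y) 2 k, pow_mul (A y) 2 i, pow_mul (B y) 2 (k-i)]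
        rw [rpow_pow_div (sq_nonneg (A y)) k i hk, rpow_pow_div (sq_nonneg (B y)) k (k-i) hk]
      simp_rw [hrw]
      have hH := holder_sum (fun y => (A y)^(2*k)) (fun y => (B y)^(2*k))
        (fun y => by simpa [pow_mul] using pow_nonneg (sq_nonneg (A y)) k)
        (fun y => by simpa [pow_mul] using pow_nonneg (sq_nonneg (B y)) k)
        θ hθ0 hθ1
      refine le_trans hH ?_
      have hPnn : 0 ≤ ∑ y, (A y)^(2*k) :=
        Finset.sum_nonneg fun y _ => by rw [pow_mul]; positivity
      have hQnn : 0 ≤ ∑ y, (B y)^(2*k) :=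
        Finset.sum_nonneg fun y _ => by rw [pow_mul]; positivity
      have h2n : (0:ℝ) ≤ 2^n := by positivity
      have hPθ : (∑ y, (A y)^(2*k))^θ ≤ (2^n)^θ * p^i := by
        calc (∑ y, (A y)^(2*k))^θ ≤ ((2:ℝ)^n * p^k)^θ :=
              Real.rpow_le_rpow hPnn hP (le_of_lt hθ0)
          _ = (2^n)^θ * (p^k)^θ := Real.mul_rpow h2n (by positivity)
          _ = (2^n)^θ * p^i := by rw [hθ, rpow_pow_div hp0 k i hk]
      have hQθ : (∑ y, (B y)^(2*k))^(1-θ) ≤ (2^n)^(1-θ) * q^(k-i) := by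
        calc (∑ y, (B y)^(2*k))^(1-θ) ≤ ((2:ℝ)^n * q^k)^(1-θ) :=
              Real.rpow_le_rpow hQnn hQ (by linarith)
          _ = (2^n)^(1-θ) * (q^k)^(1-θ) := Real.mul_rpow h2n (by positivity)
          _ = (2^n)^(1-θ) * q^(k-i) := by rw [hmθ, rpow_pow_div hq0 k (k-i) hk]
      calc (∑ y, (A y)^(2*k))^θ * (∑ y, (B y)^(2*k))^(1-θ)
          ≤ ((2^n)^θ * p^i) * ((2^n)^(1-θ) * q^(k-i)) := by
            apply mul_le_mul hPθ hQθ (Real.rpow_nonneg hQnn _) (by positivity)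
        _ = ((2:ℝ)^n)^θ * ((2:ℝ)^n)^(1-θ) * (p^i * q^(k-i)) := by ring
        _ = 2^n * (p^i * q^(k-i)) := by
            rw [← Real.rpow_add (by positivity : (0:ℝ) < 2^n)]
            norm_num
    -- combine
    calc ∑ i ∈ Finset.range (k+1), 2 * (k.choose i : ℝ)
           * ∑ y, (A y)^(2*i) * (B y)^(2*(k-i))
        ≤ ∑ i ∈ Finset.range (k+1), 2 * (k.choose i : ℝ) * (2^n * (p^i * q^(k-i))) := by
          apply Finset.sum_le_sum
          intro i hi
          apply mul_le_mul_of_nonneg_left (hSi i hi) (by positivity)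
      _ = 2^(n+1) * ∑ i ∈ Finset.range (k+1), p^i * q^(k-i) * (k.choose i : ℝ) := by
          rw [Finset.mul_sum]
          exact Finset.sum_congr rfl fun i _ => by ring
      _ = 2^(n+1) * (p + q)^k := by rw [add_pow]
      _ = 2^(n+1) * (∑ s : Fin (n+1) → Bool, (c s)^2)^k := by
          congr 2
          rw [sum_cons (fun s => (c s)^2), Fintype.sum_bool, hp, hq]
          rw [ha, hbb]
          ring
end LevelIneq


set_option maxHeartbeats 2000000 in
open LevelIneq Finset in
/-- Level-`ℓ` inequality: for `f : {-1,1}ⁿ → [-1,1]` with `E|f| = α`, the level-`ℓ`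
Fourier weight satisfies `∑_{|S| = ℓ} f̂(S)² ≤ 4α² (2e ln(e / α^(1/ℓ)))^ℓ`. -/
theorem level_l_inequality (n : ℕ) (f : (Fin n → Bool) → ℝ)
    (hf : ∀ x, |f x| ≤ 1) (α : ℝ) (hα : α = (∑ x, |f x|) / 2 ^ n) (ℓ : ℕ) :
    ∑ S ∈ (Finset.univ : Finset (Finset (Fin n))).filter (fun S => S.card = ℓ),
      ((∑ x, f x * ∏ i ∈ S, (if x i then (-1 : ℝ) else 1)) / 2 ^ n) ^ 2
    ≤ 4 * α ^ 2 *
        (2 * Real.exp 1 * Real.log (Real.exp 1 / α ^ ((1 : ℝ) / (ℓ : ℝ)))) ^ ℓ := by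
  have hN : (0:ℝ) < 2 ^ n := by positivity
  set hat : (Fin n → Bool) → ℝ := fun s => ∑ x, f x * chi s x with hhat
  -- Step 0: rewrite the LHS as a sum over Boolean indicator functions
  have conv : ∑ S ∈ (Finset.univ : Finset (Finset (Fin n))).filter (fun S => S.card = ℓ),
      ((∑ x, f x * ∏ i ∈ S, (if x i then (-1 : ℝ) else 1)) / 2 ^ n) ^ 2
      = ∑ s ∈ Finset.univ.filter (fun s : Fin n → Bool => wt s = ℓ),
          (hat s / 2 ^ n) ^ 2 := by
    apply Finset.sum_nbij' (i := fun S => fun j => decide (j ∈ S))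
      (j := fun s => Finset.univ.filter (fun j => s j = true))
    · intro S hS
      rw [Finset.mem_filter] at hS ⊢
      refine ⟨Finset.mem_univ _, ?_⟩
      rw [wt, ← hS.2, Finset.card_eq_sum_ones S]
      simp only [decide_eq_true_eq]
      rw [Finset.sum_ite_mem, Finset.univ_inter]
    · intro s hs
      rw [Finset.mem_filter] at hs ⊢
      refine ⟨Finset.mem_univ _, ?_⟩
      rw [← hs.2, wt, Finset.card_filter]
    · intro S _
      ext j
      simp
    · intro s _
      funext j
      simp
    · intro S _
      have : ∀ x : Fin n → Bool, ∏ i ∈ S, (if x i then (-1:ℝ) else 1)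
          = chi (fun j => decide (j ∈ S)) x := by
        intro x
        rw [chi]
        have : ∀ i : Fin n, bch (decide (i ∈ S)) (x i)
            = if i ∈ S then (if x i then (-1:ℝ) else 1) else 1 := by
          intro i
          by_cases h : i ∈ S <;> simp [bch, sg, h]
        simp_rw [this]
        rw [Finset.prod_ite_mem, Finset.univ_inter]
      simp_rw [this]
      rfl
  rw [conv]
  set W := ∑ s ∈ Finset.univ.filter (fun s : Fin n → Bool => wt s = ℓ), (hat s)^2 with hW
  have hW0 : 0 ≤ W := Finset.sum_nonneg fun s _ => sq_nonneg _
  have lhs_eq : ∑ s ∈ Finset.univ.filter (fun s : Fin n → Bool => wt s = ℓ),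
      (hat s / 2 ^ n) ^ 2 = W / ((2:ℝ)^n)^2 := by
    rw [hW, Finset.sum_div]
    exact Finset.sum_congr rfl fun s _ => by rw [div_pow]
  rw [lhs_eq]
  have hα0 : 0 ≤ α := by
    rw [hα]
    positivity
  have hsumabs : ∑ x, |f x| = 2^n * α := by rw [hα]; field_simp
  have hα1 : α ≤ 1 := by
    rw [hα, div_le_one hN]
    calc ∑ x, |f x| ≤ ∑ _x : Fin n → Bool, (1:ℝ) := Finset.sum_le_sum fun x _ => hf x
      _ = (Fintype.card (Fin n → Bool) : ℝ) := by
          rw [Finset.sum_const, Finset.card_univ]; simp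
      _ = 2^n := by simp [Fintype.card_fun]
  rcases eq_or_lt_of_le hα0 with hα0' | hαpos
  · -- α = 0 : f is identically zero
    have hf0 : ∀ x, f x = 0 := by
      intro x
      have hsum0 : ∑ x, |f x| = 0 := by rw [hsumabs, ← hα0', mul_zero]
      have := (Finset.sum_eq_zero_iff_of_nonneg
        (fun x _ => abs_nonneg (f x))).mp hsum0 x (Finset.mem_univ x)
      exact abs_eq_zero.mp this
    have hWz : W = 0 := by
      rw [hW]
      apply Finset.sum_eq_zero
      intro s _
      have : hat s = 0 := Finset.sum_eq_zero fun x _ => by rw [hf0 x, zero_mul]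
      rw [this]; norm_num
    rw [hWz, ← hα0']
    norm_num
  rcases Nat.eq_zero_or_pos ℓ with hℓ0 | hℓpos
  · -- ℓ = 0
    subst hℓ0
    rw [pow_zero, mul_one]
    have hfilter : Finset.univ.filter (fun s : Fin n → Bool => wt s = 0)
        = {fun _ => false} := by
      ext s
      simp only [Finset.mem_filter, Finset.mem_univ, true_and, Finset.mem_singleton]
      constructor
      · intro h
        funext i
        by_contra hi
        have hsi : s i = true := by revert hi; cases s i <;> simp
        have : 1 ≤ wt s := by
          rw [wt]
          calc (1:ℕ) = if s i then 1 else 0 := by rw [hsi]; rfl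
            _ ≤ _ := Finset.single_le_sum
                (f := fun i => if s i then (1:ℕ) else 0) (fun _ _ => by positivity)
                (Finset.mem_univ i)
        omega
      · intro h; subst h; simp [wt]
    have hWeq : W = (∑ x, f x)^2 := by
      rw [hW, hfilter, Finset.sum_singleton]
      congr 1
      rw [hhat]
      apply Finset.sum_congr rfl
      intro x _
      have : chi (fun _ => false) x = 1 := by
        rw [chi]; exact Finset.prod_eq_one fun i _ => rfl
      rw [this, mul_one]
    have hle : (∑ x, f x)^2 ≤ (2^n * α)^2 := by
      rw [← hsumabs, ← sq_abs (∑ x, f x)]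
      apply pow_le_pow_left₀ (abs_nonneg _)
      exact Finset.abs_sum_le_sum_abs _ _
    rw [hWeq, div_le_iff₀ (by positivity)]
    calc (∑ x, f x)^2 ≤ (2^n * α)^2 := hle
      _ = α^2 * ((2:ℝ)^n)^2 := by ring
      _ ≤ 4 * α^2 * ((2:ℝ)^n)^2 := by
          have hx : (0:ℝ) ≤ α^2 * ((2:ℝ)^n)^2 := by positivity
          linarith only [hx]
  -- main case : α > 0, ℓ ≥ 1
  set L := Real.log (Real.exp 1 / α ^ ((1:ℝ)/(ℓ:ℝ))) with hLdef
  have hℓR : (0:ℝ) < (ℓ:ℝ) := by exact_mod_cast hℓpos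
  have hLform : L = 1 - (1/(ℓ:ℝ)) * Real.log α := by
    rw [hLdef, Real.log_div (Real.exp_ne_zero 1)
      (ne_of_gt (Real.rpow_pos_of_pos hαpos _)), Real.log_exp, Real.log_rpow hαpos]
  have hlogα : Real.log α ≤ 0 := Real.log_nonpos hα0 hα1
  have hL1 : 1 ≤ L := by
    rw [hLform]
    have : (1/(ℓ:ℝ)) * Real.log α ≤ 0 :=
      mul_nonpos_of_nonneg_of_nonpos (by positivity) hlogα
    linarith
  have hLpos : 0 < L := by linarith
  set k := ⌈L⌉₊ with hkdef
  have hk1 : 1 ≤ k := Nat.ceil_pos.mpr hLpos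
  have hkL : L ≤ (k:ℝ) := Nat.le_ceil L
  have hkL2 : (k:ℝ) < L + 1 := Nat.ceil_lt_add_one (le_of_lt hLpos)
  have hkR : (1:ℝ) ≤ (k:ℝ) := by exact_mod_cast hk1
  have h2k1pos : (0:ℝ) < 2*(k:ℝ)-1 := by linarith
  set ρ := Real.sqrt (1/(2*(k:ℝ)-1)) with hρdef
  have hρsq : ρ^2 = 1/(2*(k:ℝ)-1) := Real.sq_sqrt (by positivity)
  have hρpos : 0 < ρ := Real.sqrt_pos.mpr (by positivity)
  set d : (Fin n → Bool) → ℝ := fun s => if wt s = ℓ then hat s else 0 with hd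
  set g : (Fin n → Bool) → ℝ := fun x => ∑ s, d s * chi s x with hg
  have hWd : ∑ s, d s * hat s = W := by
    rw [hW, Finset.sum_filter]
    apply Finset.sum_congr rfl
    intro s _
    rw [hd]
    by_cases h : wt s = ℓ <;> simp [h, sq]
  have F1 : ∑ x, f x * g x = W := by
    calc ∑ x, f x * g x = ∑ s, d s * ∑ x, f x * chi s x := sum_f_mul_expand f d
      _ = ∑ s, d s * hat s := by rw [hhat]
      _ = W := hWd
  have F3 : ∑ x, (g x)^(2*k) ≤ 2^n * ((2*(k:ℝ)-1)^ℓ * W)^k := by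
    set cc : (Fin n → Bool) → ℝ := fun s => if wt s = ℓ then hat s / ρ^ℓ else 0 with hcc
    have hgc : ∀ x, g x = ∑ s, ρ^(wt s) * cc s * chi s x := by
      intro x
      rw [hg]
      apply Finset.sum_congr rfl
      intro s _
      simp only [hd, hcc]
      by_cases h : wt s = ℓ
      · rw [if_pos h, if_pos h, h]
        field_simp
      · rw [if_neg h, if_neg h]
        ring
    have h1 := hyper k hk1 ρ (by rw [hρsq]; field_simp; norm_num) n cc
    simp_rw [← hgc] at h1
    have hcc2 : ∑ s, (cc s)^2 = (2*(k:ℝ)-1)^ℓ * W := by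
      have hterm : ∀ s : Fin n → Bool, (cc s)^2
          = if wt s = ℓ then (2*(k:ℝ)-1)^ℓ * (hat s)^2 else 0 := by
        intro s
        simp only [hcc]
        by_cases h : wt s = ℓ
        · rw [if_pos h, if_pos h, div_pow, ← pow_mul, show ℓ*2 = 2*ℓ from by ring,
            pow_mul, hρsq, one_div, inv_pow, div_inv_eq_mul]
          ring
        · rw [if_neg h, if_neg h]
          norm_num
      simp_rw [hterm]
      rw [← Finset.sum_filter, hW, Finset.mul_sum]
    rw [hcc2] at h1
    exact h1
  -- Hölder step
  set θ : ℝ := (2*(k:ℝ)-1)/(2*(k:ℝ)) with hθ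
  have h2kpos : (0:ℝ) < 2*(k:ℝ) := by linarith
  have hθ0 : 0 < θ := by rw [hθ]; positivity
  have hθ1 : θ < 1 := by
    rw [hθ, div_lt_one h2kpos]
    linarith
  have h1mθ : 1 - θ = 1/(2*(k:ℝ)) := by
    rw [hθ]
    field_simp
    ring
  set M := (2*(k:ℝ)-1)^ℓ with hM
  have hMpos : 0 < M := by rw [hM]; positivity
  have F4 : W ≤ 2^n * α^θ * Real.sqrt (M * W) := by
    set u : (Fin n → Bool) → ℝ := fun x => |f x| ^ ((1:ℝ)/θ) with hu
    set v : (Fin n → Bool) → ℝ := fun x => (g x)^(2*k) with hv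
    have hunn : ∀ x, 0 ≤ u x := fun x => Real.rpow_nonneg (abs_nonneg _) _
    have hvnn : ∀ x, 0 ≤ v x := fun x => by
      simp only [hv]
      rw [pow_mul]
      positivity
    have huv : ∀ x, |f x| * |g x| = (u x)^θ * (v x)^(1-θ) := by
      intro x
      have h1 : (u x)^θ = |f x| := by
        simp only [hu]
        rw [← Real.rpow_mul (abs_nonneg _), one_div,
          inv_mul_cancel₀ (ne_of_gt hθ0), Real.rpow_one]
      have h2 : (v x)^(1-θ) = |g x| := by
        simp only [hv]
        have : (g x)^(2*k) = |g x|^(2*k) := by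
          rw [pow_mul, pow_mul, sq_abs]
        rw [this, h1mθ, ← Real.rpow_natCast |g x| (2*k),
          ← Real.rpow_mul (abs_nonneg _)]
        rw [show ((2*k : ℕ):ℝ) * (1/(2*(k:ℝ))) = 1 by push_cast; field_simp]
        exact Real.rpow_one _
      rw [h1, h2]
    have hsum_u : ∑ x, u x ≤ 2^n * α := by
      rw [← hsumabs]
      apply Finset.sum_le_sum
      intro x _
      simp only [hu]
      rcases eq_or_lt_of_le (abs_nonneg (f x)) with h|h
      · rw [← h, Real.zero_rpow (by positivity)]
      · calc |f x| ^ ((1:ℝ)/θ) ≤ |f x| ^ (1:ℝ) := by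
              apply Real.rpow_le_rpow_of_exponent_ge h (hf x)
              rw [one_div]
              exact (one_le_inv₀ hθ0).mpr (le_of_lt hθ1)
          _ = |f x| := Real.rpow_one _
    have hH := holder_sum u v hunn hvnn θ hθ0 hθ1
    have husum_nn : 0 ≤ ∑ x, u x := Finset.sum_nonneg fun x _ => hunn x
    have hvsum_nn : 0 ≤ ∑ x, v x := Finset.sum_nonneg fun x _ => hvnn x
    have hvsum : ∑ x, v x ≤ 2^n * (M*W)^k := F3
    calc W = ∑ x, f x * g x := F1.symm
      _ ≤ ∑ x, |f x * g x| := Finset.sum_le_sum fun x _ => le_abs_self _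
      _ = ∑ x, (u x)^θ * (v x)^(1-θ) := by
          apply Finset.sum_congr rfl
          intro x _
          rw [abs_mul, huv x]
      _ ≤ (∑ x, u x)^θ * (∑ x, v x)^(1-θ) := hH
      _ ≤ ((2:ℝ)^n * α)^θ * ((2:ℝ)^n * (M*W)^k)^(1-θ) := by
          apply mul_le_mul
          · exact Real.rpow_le_rpow husum_nn hsum_u (le_of_lt hθ0)
          · exact Real.rpow_le_rpow hvsum_nn hvsum (by linarith)
          · exact Real.rpow_nonneg hvsum_nn _
          · positivity
      _ = 2^n * α^θ * Real.sqrt (M * W) := by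
          rw [Real.mul_rpow (by positivity) (le_of_lt hαpos),
            Real.mul_rpow (by positivity) (by positivity)]
          have e1 : ((M*W)^k) ^ (1-θ) = Real.sqrt (M*W) := by
            rw [h1mθ, ← Real.rpow_natCast (M*W) k, ← Real.rpow_mul (by positivity)]
            rw [show (k:ℝ) * (1/(2*(k:ℝ))) = 1/2 by field_simp]
            rw [Real.sqrt_eq_rpow]
          have e2 : ((2:ℝ)^n)^θ * ((2:ℝ)^n)^(1-θ) = 2^n := by
            rw [← Real.rpow_add hN]
            norm_num
          rw [e1]
          calc ((2:ℝ)^n)^θ * α^θ * (((2:ℝ)^n)^(1-θ) * Real.sqrt (M*W))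
              = (((2:ℝ)^n)^θ * ((2:ℝ)^n)^(1-θ)) * α^θ * Real.sqrt (M*W) := by ring
            _ = 2^n * α^θ * Real.sqrt (M * W) := by rw [e2]
  -- solve for W
  have F5 : W / ((2:ℝ)^n)^2 ≤ α^(2*θ) * M := by
    have hsqrtMW : Real.sqrt (M*W) = Real.sqrt M * Real.sqrt W :=
      Real.sqrt_mul (le_of_lt hMpos) W
    set C := 2^n * α^θ * Real.sqrt M with hC
    have hC0 : 0 ≤ C := by
      rw [hC]
      have := Real.rpow_nonneg (le_of_lt hαpos) θ
      positivity
    have hWC : W ≤ C * Real.sqrt W := by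
      calc W ≤ 2^n * α^θ * Real.sqrt (M*W) := F4
        _ = C * Real.sqrt W := by rw [hsqrtMW, hC]; ring
    have hsW : Real.sqrt W ≤ C := by
      rcases eq_or_lt_of_le hW0 with h0 | hWpos
      · rw [← h0, Real.sqrt_zero]
        exact hC0
      · have hsWpos : 0 < Real.sqrt W := Real.sqrt_pos.mpr hWpos
        have : Real.sqrt W * Real.sqrt W ≤ C * Real.sqrt W := by
          rw [Real.mul_self_sqrt hW0]
          exact hWC
        exact le_of_mul_le_mul_right this hsWpos
    have hWC2 : W ≤ C^2 := by
      calc W = Real.sqrt W * Real.sqrt W := (Real.mul_self_sqrt hW0).symm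
        _ ≤ C * C := mul_le_mul hsW hsW (Real.sqrt_nonneg _) hC0
        _ = C^2 := (sq C).symm
    have hC2 : C^2 = ((2:ℝ)^n)^2 * (α^(2*θ) * M) := by
      rw [hC]
      have h1 : (α^θ)^2 = α^(2*θ) := by
        rw [← Real.rpow_natCast (α^θ) 2, ← Real.rpow_mul (le_of_lt hαpos)]
        norm_num
        rw [mul_comm]
      have h2 : (Real.sqrt M)^2 = M := Real.sq_sqrt (le_of_lt hMpos)
      calc (2^n * α^θ * Real.sqrt M)^2
          = ((2:ℝ)^n)^2 * ((α^θ)^2 * (Real.sqrt M)^2) := by ring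
        _ = ((2:ℝ)^n)^2 * (α^(2*θ) * M) := by rw [h1, h2]
    rw [div_le_iff₀ (by positivity)]
    calc W ≤ C^2 := hWC2
      _ = α^(2*θ) * M * ((2:ℝ)^n)^2 := by rw [hC2]; ring
  refine le_trans F5 ?_
  -- final arithmetic
  have h2θ : 2*θ = 2 - 1/(k:ℝ) := by
    rw [hθ]
    field_simp
  have hklogform : α^(2*θ) = α^2 * α^(-(1/(k:ℝ))) := by
    rw [h2θ, show (2:ℝ) - 1/(k:ℝ) = 2 + (-(1/(k:ℝ))) by ring,
      Real.rpow_add hαpos, Real.rpow_two]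
  have hlogαval : Real.log α = (ℓ:ℝ)*(1-L) := by
    rw [hLform]
    field_simp
    ring
  have hexp1 : α^(-(1/(k:ℝ))) ≤ Real.exp ((ℓ:ℝ)*(1 - 1/L)) := by
    rw [Real.rpow_def_of_pos hαpos, hlogαval]
    apply Real.exp_le_exp.mpr
    have hstep : (L-1)/(k:ℝ) ≤ (L-1)/L :=
      div_le_div_of_nonneg_left (by linarith) hLpos hkL
    calc (ℓ:ℝ)*(1-L) * (-(1/(k:ℝ))) = (ℓ:ℝ) * ((L-1)/(k:ℝ)) := by field_simp; ring
      _ ≤ (ℓ:ℝ) * ((L-1)/L) := by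
          apply mul_le_mul_of_nonneg_left hstep (le_of_lt hℓR)
      _ = (ℓ:ℝ) * (1 - 1/L) := by
          congr 1
          field_simp
  have hMle : M ≤ (2*L+1)^ℓ := by
    rw [hM]
    apply pow_le_pow_left₀ (by linarith) (by linarith)
  have hkey : (2*L+1) * Real.exp (1 - 1/L) ≤ 2 * Real.exp 1 * L := by
    have h3 : (2*L+1) * Real.exp (-(1/L)) ≤ 2*L := by
      rw [Real.exp_neg]
      rw [mul_inv_le_iff₀ (Real.exp_pos _)]
      have hE := Real.add_one_le_exp (1/L)
      have hmul : 2*L*(1/L+1) ≤ 2*L*Real.exp (1/L) :=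
        mul_le_mul_of_nonneg_left hE (by positivity)
      have hid : 2*L*(1/L+1) = 2 + 2*L := by field_simp
      rw [hid] at hmul
      linarith only [hmul, hLpos]
    calc (2*L+1) * Real.exp (1 - 1/L)
        = Real.exp 1 * ((2*L+1) * Real.exp (-(1/L))) := by
          rw [show (1:ℝ) - 1/L = 1 + (-(1/L)) by ring, Real.exp_add]
          ring
      _ ≤ Real.exp 1 * (2*L) := by
          apply mul_le_mul_of_nonneg_left h3 (le_of_lt (Real.exp_pos 1))
      _ = 2 * Real.exp 1 * L := by ring
  have hαθM : α^(2*θ) * M ≤ α^2 * ((2*L+1) * Real.exp (1-1/L))^ℓ := by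
    rw [hklogform, mul_pow]
    have hrw : (Real.exp (1-1/L))^ℓ = Real.exp ((ℓ:ℝ)*(1-1/L)) := by
      rw [← Real.exp_nat_mul]
    rw [hrw]
    calc α^2 * α^(-(1/(k:ℝ))) * M
        ≤ α^2 * Real.exp ((ℓ:ℝ)*(1-1/L)) * (2*L+1)^ℓ := by
          apply mul_le_mul
          · exact mul_le_mul_of_nonneg_left hexp1 (by positivity)
          · exact hMle
          · exact le_of_lt hMpos
          · positivity
      _ = α^2 * ((2*L+1)^ℓ * Real.exp ((ℓ:ℝ)*(1-1/L))) := by ring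
  refine le_trans hαθM ?_
  have hfinpow : ((2*L+1) * Real.exp (1-1/L))^ℓ ≤ (2 * Real.exp 1 * L)^ℓ := by
    apply pow_le_pow_left₀ (by positivity) hkey
  calc α^2 * ((2*L+1) * Real.exp (1-1/L))^ℓ
      ≤ α^2 * (2 * Real.exp 1 * L)^ℓ := by
        apply mul_le_mul_of_nonneg_left hfinpow (by positivity)
    _ ≤ 4 * α^2 * (2 * Real.exp 1 * L)^ℓ := by
        have hx : (0:ℝ) ≤ α^2 * (2 * Real.exp 1 * L)^ℓ := by positivity
        linarith only [hx]
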